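/- Let φ : 𝔻 → 𝔻 be holomorphic with φ ∉ Aut(𝔻). Then for all z, w ∈ 𝔻, the hyperbolic distance between the hyperbolic distortions satisfies k(D_h φ(z), D_h φ(w)) ≤ 2 k(z,w), where D_h φ(z), D_h φ(w) ∈ [0,1) are regarded as points of 𝔻. -/

import Mathlib

open Metric Set

noncomputable def Dh (φ : ℂ → ℂ) (z : ℂ) : ℝ :=
  (1 - ‖z‖ ^ 2) * ‖deriv φ z‖ / (1 - ‖φ z‖ ^ 2)

noncomputable def pdist (z w : ℂ) : ℝ :=
  ‖(z - w) / (1 - (starRingEnd ℂ) w * z)‖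

noncomputable def hdist (z w : ℂ) : ℝ :=
  Real.log ((1 + pdist z w) / (1 - pdist z w))

/-- `φ` is a conformal automorphism of the unit disk. -/
def IsDiskAut (φ : ℂ → ℂ) : Prop :=
  ∃ ψ : ℂ → ℂ, DifferentiableOn ℂ ψ (ball (0:ℂ) 1) ∧
    MapsTo ψ (ball (0:ℂ) 1) (ball (0:ℂ) 1) ∧
    (∀ z ∈ ball (0:ℂ) 1, ψ (φ z) = z) ∧
    (∀ z ∈ ball (0:ℂ) 1, φ (ψ z) = z)

namespace BM

noncomputable def mobius (a z : ℂ) : ℂ := (z - a) / (1 - (starRingEnd ℂ) a * z)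

lemma den_ne {a z : ℂ} (ha : ‖a‖ < 1) (hz : ‖z‖ < 1) :
    (1 : ℂ) - (starRingEnd ℂ) a * z ≠ 0 := by
  intro h
  have h1 : (1:ℂ) = (starRingEnd ℂ) a * z := by linear_combination h
  have : ‖(starRingEnd ℂ) a * z‖ < 1 := by
    rw [norm_mul, Complex.norm_conj]
    nlinarith [norm_nonneg a, norm_nonneg z]
  rw [← h1] at this; simp at this

lemma normSq_identity (a z : ℂ) :
    Complex.normSq (1 - (starRingEnd ℂ) a * z) - Complex.normSq (z - a)
      = (1 - Complex.normSq a) * (1 - Complex.normSq z) := by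
  simp only [Complex.normSq_apply, Complex.sub_re, Complex.sub_im, Complex.mul_re,
    Complex.mul_im, Complex.one_re, Complex.one_im, Complex.conj_re, Complex.conj_im]
  ring

lemma mobius_abs_lt {a z : ℂ} (ha : ‖a‖ < 1) (hz : ‖z‖ < 1) :
    ‖mobius a z‖ < 1 := by
  rw [mobius, norm_div, div_lt_one (norm_pos_iff.mpr (den_ne ha hz))]
  have h := normSq_identity a z
  have h1 : 0 < 1 - Complex.normSq a := by
    rw [← Complex.sq_norm]; nlinarith [norm_nonneg a]
  have h2 : 0 < 1 - Complex.normSq z := by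
    rw [← Complex.sq_norm]; nlinarith [norm_nonneg z]
  have h3 : Complex.normSq (z - a) < Complex.normSq (1 - (starRingEnd ℂ) a * z) := by nlinarith
  rw [Complex.norm_def, Complex.norm_def]
  exact Real.sqrt_lt_sqrt (Complex.normSq_nonneg _) h3

lemma mobius_inv {a z : ℂ} (ha : ‖a‖ < 1) (hz : ‖z‖ < 1) :
    mobius (-a) (mobius a z) = z := by
  have h1 : (1 : ℂ) - (starRingEnd ℂ) a * z ≠ 0 := den_ne ha hz
  have h2 : (1 : ℂ) - (starRingEnd ℂ) a * a ≠ 0 := den_ne ha ha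
  have h2' : (1 : ℂ) - a * (starRingEnd ℂ) a ≠ 0 := by rwa [mul_comm] at h2
  have h1'' : (1 : ℂ) - z * (starRingEnd ℂ) a ≠ 0 := by rwa [mul_comm] at h1
  simp only [mobius, map_neg]
  rw [div_sub' h1]
  field_simp
  ring_nf
  field_simp
  ring

lemma mobius_inv' {a z : ℂ} (ha : ‖a‖ < 1) (hz : ‖z‖ < 1) :
    mobius a (mobius (-a) z) = z := by
  have h := mobius_inv (a := -a) (by rwa [norm_neg]) hz
  rwa [neg_neg] at h

lemma mobius_hasDerivAt (a : ℂ) {z : ℂ} (h : (1:ℂ) - (starRingEnd ℂ) a * z ≠ 0) :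
    HasDerivAt (mobius a) ((1 - (starRingEnd ℂ) a * a) / (1 - (starRingEnd ℂ) a * z)^2) z := by
  have h1 : HasDerivAt (fun z : ℂ => z - a) 1 z := (hasDerivAt_id z).sub_const a
  have h2 : HasDerivAt (fun z : ℂ => 1 - (starRingEnd ℂ) a * z) (-(starRingEnd ℂ) a) z := by
    simpa using ((hasDerivAt_id z).const_mul ((starRingEnd ℂ) a)).const_sub 1
  have := h1.div h2 h
  refine this.congr_deriv ?_
  ring

lemma mobius_differentiableOn (a : ℂ) (ha : ‖a‖ < 1) :
    DifferentiableOn ℂ (mobius a) (ball (0:ℂ) 1) := by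
  intro z hz
  rw [mem_ball_zero_iff] at hz
  exact (mobius_hasDerivAt a (den_ne ha hz)).differentiableAt.differentiableWithinAt

lemma mobius_self (a : ℂ) : mobius a a = 0 := by simp [mobius]

lemma mobius_mapsTo {a : ℂ} (ha : ‖a‖ < 1) :
    MapsTo (mobius a) (ball (0:ℂ) 1) (ball (0:ℂ) 1) := by
  intro z hz
  rw [mem_ball_zero_iff] at *
  exact mobius_abs_lt ha hz

lemma mem_ball_abs {z : ℂ} (h : z ∈ ball (0:ℂ) 1) : ‖z‖ < 1 := by
  rwa [mem_ball_zero_iff] at h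

lemma abs_mem_ball {z : ℂ} (h : ‖z‖ < 1) : z ∈ ball (0:ℂ) 1 := by
  rwa [mem_ball_zero_iff]

/-! ### The function `h = T_{φ a} ∘ φ ∘ T_{-a}` -/

variable (φ : ℂ → ℂ)

noncomputable def hfun (a : ℂ) : ℂ → ℂ := fun ζ => mobius (φ a) (φ (mobius (-a) ζ))

lemma hfun_zero {a : ℂ} (ha : ‖a‖ < 1) : hfun φ a 0 = 0 := by
  have : mobius (-a) 0 = a := by simp [mobius]
  rw [hfun, this, mobius_self]

variable (hφ : DifferentiableOn ℂ φ (ball (0:ℂ) 1))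
  (hmap : MapsTo φ (ball (0:ℂ) 1) (ball (0:ℂ) 1))

section hf
include hφ hmap

lemma hfun_diff {a : ℂ} (ha : a ∈ ball (0:ℂ) 1) :
    DifferentiableOn ℂ (hfun φ a) (ball (0:ℂ) 1) := by
  have hma : ‖-a‖ < 1 := by rw [norm_neg]; exact mem_ball_abs ha
  have h1 : MapsTo (mobius (-a)) (ball (0:ℂ) 1) (ball (0:ℂ) 1) := mobius_mapsTo hma
  have hfa : ‖φ a‖ < 1 := mem_ball_abs (hmap ha)
  exact ((mobius_differentiableOn (φ a) hfa).comp
    (hφ.comp (mobius_differentiableOn (-a) hma) h1) (hmap.comp h1))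

lemma hfun_mapsTo {a : ℂ} (ha : a ∈ ball (0:ℂ) 1) :
    MapsTo (hfun φ a) (ball (0:ℂ) 1) (ball (0:ℂ) 1) := by
  have hma : ‖-a‖ < 1 := by rw [norm_neg]; exact mem_ball_abs ha
  have hfa : ‖φ a‖ < 1 := mem_ball_abs (hmap ha)
  exact (mobius_mapsTo hfa).comp (hmap.comp (mobius_mapsTo hma))

lemma hfun_dslope_le {a : ℂ} (ha : a ∈ ball (0:ℂ) 1) {ζ : ℂ} (hζ : ζ ∈ ball (0:ℂ) 1) :
    ‖dslope (hfun φ a) 0 ζ‖ ≤ 1 := by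
  have h := Complex.norm_dslope_le_div_of_mapsTo_ball (hfun_diff φ hφ hmap ha)
    (by rw [hfun_zero φ (mem_ball_abs ha)]; exact (hfun_mapsTo φ hφ hmap ha).mono_right ball_subset_closedBall) hζ
  simpa using h

lemma hfun_dslope_lt (haut : ¬ IsDiskAut φ) {a : ℂ} (ha : a ∈ ball (0:ℂ) 1)
    {ζ : ℂ} (hζ : ζ ∈ ball (0:ℂ) 1) :
    ‖dslope (hfun φ a) 0 ζ‖ < 1 := by
  rcases lt_or_eq_of_le (hfun_dslope_le φ hφ hmap ha hζ) with h | h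
  · exact h
  exfalso
  apply haut
  -- the equality case: h is affine, so φ is a Möbius automorphism
  obtain ⟨C, hC, hEq⟩ := Complex.affine_of_mapsTo_ball_of_exists_norm_dslope_eq_div'
    (f := hfun φ a) (hfun_diff φ hφ hmap ha)
    (by rw [hfun_zero φ (mem_ball_abs ha)]; exact (hfun_mapsTo φ hφ hmap ha).mono_right ball_subset_closedBall)
    ⟨ζ, hζ, by simpa using h⟩
  rw [div_one] at hC
  have hCabs : ‖C‖ = 1 := by exact hC
  have ha' : ‖a‖ < 1 := mem_ball_abs ha
  have hfa : ‖φ a‖ < 1 := mem_ball_abs (hmap ha)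
  -- hEq : ∀ ζ ∈ ball, hfun φ a ζ = hfun φ a 0 + (ζ - 0) • C = ζ * C
  have key : ∀ u ∈ ball (0:ℂ) 1, φ u = mobius (-(φ a)) (mobius a u * C) := by
    intro u hu
    have hu' : ‖u‖ < 1 := mem_ball_abs hu
    have h1 : mobius a u ∈ ball (0:ℂ) 1 := abs_mem_ball (mobius_abs_lt ha' hu')
    have h2 := hEq h1
    simp only [smul_eq_mul, sub_zero] at h2
    rw [hfun_zero φ ha', zero_add] at h2
    simp only [hfun] at h2
    rw [mobius_inv ha' hu'] at h2
    have := congrArg (mobius (-(φ a))) h2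
    rwa [mobius_inv hfa (mem_ball_abs (hmap hu))] at this
  refine ⟨fun v => mobius (-a) ((starRingEnd ℂ) C * mobius (φ a) v), ?_, ?_, ?_, ?_⟩
  · intro v hv
    have hv' : ‖v‖ < 1 := mem_ball_abs hv
    have h1 : ‖(starRingEnd ℂ) C * mobius (φ a) v‖ < 1 := by
      rw [norm_mul, Complex.norm_conj, hCabs, one_mul]
      exact mobius_abs_lt hfa hv'
    have hd1 := (mobius_hasDerivAt (φ a) (den_ne hfa hv')).differentiableAt
    have hd2 : DifferentiableAt ℂ (mobius (-a))
        ((starRingEnd ℂ) C * mobius (φ a) v) := by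
      refine (mobius_hasDerivAt (-a) ?_).differentiableAt
      exact den_ne (by rwa [norm_neg]) h1
    exact (hd2.comp v ((hd1.const_mul _))).differentiableWithinAt
  · intro v hv
    have hv' : ‖v‖ < 1 := mem_ball_abs hv
    have h1 : ‖(starRingEnd ℂ) C * mobius (φ a) v‖ < 1 := by
      rw [norm_mul, Complex.norm_conj, hCabs, one_mul]
      exact mobius_abs_lt hfa hv'
    exact abs_mem_ball (mobius_abs_lt (by rwa [norm_neg]) h1)
  · intro u hu
    have hu' : ‖u‖ < 1 := mem_ball_abs hu
    rw [key u hu]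
    beta_reduce
    have h1 : ‖mobius a u * C‖ < 1 := by
      rw [norm_mul, hCabs, mul_one]; exact mobius_abs_lt ha' hu'
    rw [mobius_inv' hfa h1]
    have hCC : (starRingEnd ℂ) C * C = 1 := by
      rw [← Complex.normSq_eq_conj_mul_self, ← Complex.sq_norm, hCabs]; norm_num
    have : (starRingEnd ℂ) C * (mobius a u * C) = mobius a u := by
      rw [mul_comm (mobius a u) C, ← mul_assoc, hCC, one_mul]
    rw [this, mobius_inv ha' hu']
  · intro v hv
    have hv' : ‖v‖ < 1 := mem_ball_abs hv
    have h1 : ‖(starRingEnd ℂ) C * mobius (φ a) v‖ < 1 := by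
      rw [norm_mul, Complex.norm_conj, hCabs, one_mul]
      exact mobius_abs_lt hfa hv'
    have h2 : mobius (-a) ((starRingEnd ℂ) C * mobius (φ a) v) ∈ ball (0:ℂ) 1 :=
      abs_mem_ball (mobius_abs_lt (by rwa [norm_neg]) h1)
    beta_reduce
    rw [key _ h2]
    rw [mobius_inv' ha' h1]
    have hCC : C * (starRingEnd ℂ) C = 1 := by
      rw [Complex.mul_conj, ← Complex.sq_norm, hCabs]; norm_num
    have : (starRingEnd ℂ) C * mobius (φ a) v * C = mobius (φ a) v := by
      rw [mul_comm, ← mul_assoc, hCC, one_mul]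
    rw [this, mobius_inv hfa hv']

end hf

end BM

namespace X
open BM

lemma ofReal_one_sub_conj_mul (x : ℂ) :
    (1:ℂ) - (starRingEnd ℂ) x * x = ((1 - Complex.normSq x : ℝ) : ℂ) := by
  rw [← Complex.normSq_eq_conj_mul_self]; push_cast; ring

section hf2
variable (φ : ℂ → ℂ)
variable (hφ : DifferentiableOn ℂ φ (ball (0:ℂ) 1))
  (hmap : MapsTo φ (ball (0:ℂ) 1) (ball (0:ℂ) 1))
include hφ hmap

lemma hfun_deriv_abs {a : ℂ} (ha : a ∈ ball (0:ℂ) 1) :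
    ‖deriv (hfun φ a) 0‖ = Dh φ a := by
  have ha' := mem_ball_abs ha
  have hfa := mem_ball_abs (hmap ha)
  have hm0 : mobius (-a) 0 = a := by simp [mobius]
  have d1 : HasDerivAt (mobius (-a)) (1 - (starRingEnd ℂ) a * a) 0 := by
    have h : (1:ℂ) - (starRingEnd ℂ) (-a) * 0 ≠ 0 := by simp
    have h2 := mobius_hasDerivAt (-a) h
    convert h2 using 1
    simp
  have d2 : HasDerivAt φ (deriv φ a) (mobius (-a) 0) := by
    rw [hm0]
    exact (hφ.differentiableAt (isOpen_ball.mem_nhds ha)).hasDerivAt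
  have d12 : HasDerivAt (fun ζ => φ (mobius (-a) ζ))
      (deriv φ a * (1 - (starRingEnd ℂ) a * a)) 0 := d2.comp 0 d1
  have d3 : HasDerivAt (mobius (φ a))
      ((1 - (starRingEnd ℂ) (φ a) * (φ a)) / (1 - (starRingEnd ℂ) (φ a) * (φ a))^2)
      ((fun ζ => φ (mobius (-a) ζ)) 0) := by
    have hb : (fun ζ => φ (mobius (-a) ζ)) 0 = φ a := by
      show φ (mobius (-a) 0) = φ a
      rw [hm0]
    rw [hb]
    exact mobius_hasDerivAt _ (den_ne hfa hfa)
  have d123 : HasDerivAt (hfun φ a)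
      ((1 - (starRingEnd ℂ) (φ a) * (φ a)) / (1 - (starRingEnd ℂ) (φ a) * (φ a))^2 *
        (deriv φ a * (1 - (starRingEnd ℂ) a * a))) 0 := d3.comp 0 d12
  rw [d123.deriv]
  rw [ofReal_one_sub_conj_mul, ofReal_one_sub_conj_mul]
  have hna : 0 < 1 - Complex.normSq a := by
    rw [← Complex.sq_norm]; nlinarith [norm_nonneg a]
  have hnb : 0 < 1 - Complex.normSq (φ a) := by
    rw [← Complex.sq_norm]; nlinarith [norm_nonneg (φ a)]
  rw [norm_mul, norm_div, norm_mul, norm_pow, Complex.norm_real, Complex.norm_real, Real.norm_eq_abs, Real.norm_eq_abs,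
    abs_of_pos hna, abs_of_pos hnb, Dh, ← Complex.sq_norm a, ← Complex.sq_norm (φ a)]
  rw [Complex.sq_norm, Complex.sq_norm]
  field_simp

lemma F_pdist_le (haut : ¬ IsDiskAut φ) {a : ℂ} (ha : a ∈ ball (0:ℂ) 1)
    {ζ : ℂ} (hζ : ζ ∈ ball (0:ℂ) 1) :
    pdist (dslope (hfun φ a) 0 ζ) (dslope (hfun φ a) 0 0) ≤ ‖ζ‖ := by
  set F := dslope (hfun φ a) 0 with hF
  have hFd : DifferentiableOn ℂ F (ball (0:ℂ) 1) :=
    (Complex.differentiableOn_dslope (isOpen_ball.mem_nhds (mem_ball_self one_pos))).mpr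
      (hfun_diff φ hφ hmap ha)
  have hstrict : ∀ x ∈ ball (0:ℂ) 1, ‖F x‖ < 1 := fun x hx =>
    hfun_dslope_lt φ hφ hmap haut ha hx
  have hA : ‖F 0‖ < 1 := hstrict 0 (mem_ball_self one_pos)
  have hGd : DifferentiableOn ℂ (fun x => mobius (F 0) (F x)) (ball (0:ℂ) 1) := by
    intro x hx
    exact ((mobius_hasDerivAt (F 0)
      (den_ne hA (hstrict x hx))).differentiableAt.comp_differentiableWithinAt x (hFd x hx))
  have hGm : MapsTo (fun x => mobius (F 0) (F x)) (ball (0:ℂ) 1) (ball (0:ℂ) 1) :=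
    fun x hx => abs_mem_ball (mobius_abs_lt hA (hstrict x hx))
  have hG0 : (fun x => mobius (F 0) (F x)) 0 = 0 := by simp [mobius_self]
  have := Complex.norm_le_norm_of_mapsTo_ball hGd (hGm.mono_right ball_subset_closedBall) hG0 (mem_ball_abs hζ)
  exact this

end hf2

noncomputable def lam (t : ℝ) : ℝ := Real.log ((1 + t)/(1 - t))

lemma hdist_lam (z w : ℂ) : hdist z w = lam (pdist z w) := rfl

lemma lam_mono {s t : ℝ} (hs : 0 ≤ s) (hst : s ≤ t) (ht : t < 1) : lam s ≤ lam t := by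
  have h1 : (0:ℝ) < 1 - s := by linarith
  have h2 : (0:ℝ) < 1 - t := by linarith
  apply Real.log_le_log (div_pos (by linarith) h1)
  rw [div_le_div_iff₀ h1 h2]
  nlinarith

lemma pdist_nonneg (z w : ℂ) : 0 ≤ pdist z w := norm_nonneg _

lemma pdist_eq_mobius (z w : ℂ) : pdist z w = ‖mobius w z‖ := rfl

lemma pdist_lt_one {z w : ℂ} (hz : ‖z‖ < 1) (hw : ‖w‖ < 1) :
    pdist z w < 1 := mobius_abs_lt hw hz

lemma pdist_symm (z w : ℂ) : pdist z w = pdist w z := by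
  rw [pdist, pdist, norm_div, norm_div, norm_sub_rev]
  congr 1
  have h : (1 : ℂ) - (starRingEnd ℂ) w * z = (starRingEnd ℂ) (1 - (starRingEnd ℂ) z * w) := by
    rw [map_sub, map_one, map_mul]
    simp [mul_comm]
  rw [h, Complex.norm_conj]

lemma hdist_symm (z w : ℂ) : hdist z w = hdist w z := by
  rw [hdist, hdist, pdist_symm]

lemma pdist_self (z : ℂ) : pdist z z = 0 := by simp [pdist]

lemma pdist_real (x y : ℝ) : pdist ↑x ↑y = |(x - y)/(1 - y*x)| := by
  rw [pdist, Complex.conj_ofReal]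
  have h : ((x:ℂ) - ↑y)/(1 - ↑y * ↑x) = (((x - y)/(1 - y*x) : ℝ) : ℂ) := by push_cast; ring
  rw [h, Complex.norm_real, Real.norm_eq_abs]

lemma hdist_real_aux {x y : ℝ} (hx1 : x < 1) (hy0 : 0 ≤ y) (hyx : y ≤ x) :
    hdist ↑x ↑y = lam x - lam y := by
  have hx0 : 0 ≤ x := le_trans hy0 hyx
  have hyx1 : y * x < 1 := by nlinarith
  have h0 : (0:ℝ) < 1 - y*x := by linarith
  have hp : pdist ↑x ↑y = (x - y)/(1 - y*x) := by
    rw [pdist_real, abs_of_nonneg (div_nonneg (by linarith) h0.le)]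
  rw [hdist_lam, hp, lam, lam, lam]
  have hx1' : (0:ℝ) < 1 - x := by linarith
  have hy1' : (0:ℝ) < 1 + y := by linarith
  have hy1'' : (0:ℝ) < 1 - y := by linarith
  have hx1'' : (0:ℝ) < 1 + x := by linarith
  have h0' : (1:ℝ) - x*y ≠ 0 := by nlinarith
  have e1 : 1 + (x - y)/(1 - y*x) = ((1+x)*(1-y))/(1-y*x) := by field_simp; ring
  have e2 : 1 - (x - y)/(1 - y*x) = ((1-x)*(1+y))/(1-y*x) := by field_simp; ring
  have e3 : ((1+x)*(1-y))/(1-y*x) / (((1-x)*(1+y))/(1-y*x))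
      = ((1+x)/(1-x)) / ((1+y)/(1-y)) := by
    field_simp
  rw [e1, e2, e3, Real.log_div (div_pos hx1'' hx1').ne' (div_pos hy1' hy1'').ne']

lemma hdist_real {x y : ℝ} (hx0 : 0 ≤ x) (hx1 : x < 1) (hy0 : 0 ≤ y) (hy1 : y < 1) :
    hdist ↑x ↑y = |lam x - lam y| := by
  rcases le_total y x with h | h
  · rw [hdist_real_aux hx1 hy0 h, abs_of_nonneg (by linarith [lam_mono hy0 h hx1])]
  · rw [hdist_symm, hdist_real_aux hy1 hx0 h, abs_of_nonpos (by linarith [lam_mono hx0 h hy1])]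
    ring

lemma pdist_abs_le {A B : ℂ} (hA : ‖A‖ < 1) (hB : ‖B‖ < 1) :
    pdist ↑(‖A‖) ↑(‖B‖) ≤ pdist A B := by
  set x := ‖A‖ with hx
  set y := ‖B‖ with hy
  have hx0 : 0 ≤ x := norm_nonneg _
  have hy0 : 0 ≤ y := norm_nonneg _
  have hyx : (0:ℝ) < 1 - y*x := by nlinarith
  have hden : ‖1 - (starRingEnd ℂ) B * A‖ > 0 := norm_pos_iff.mpr (den_ne hB hA)
  rw [pdist_real, abs_div, abs_of_pos hyx, pdist, norm_div]
  rw [div_le_div_iff₀ hyx hden]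
  have hr : ((starRingEnd ℂ) B * A).re ≤ y * x := by
    calc ((starRingEnd ℂ) B * A).re ≤ ‖(starRingEnd ℂ) B * A‖ := Complex.re_le_norm _
      _ = y * x := by rw [norm_mul, Complex.norm_conj]
  have e1 : (‖1 - (starRingEnd ℂ) B * A‖)^2
      = 1 - 2*((starRingEnd ℂ) B * A).re + x^2 * y^2 := by
    rw [Complex.sq_norm]
    simp only [Complex.normSq_apply, Complex.sub_re, Complex.sub_im, Complex.mul_re,
      Complex.mul_im, Complex.one_re, Complex.one_im, Complex.conj_re, Complex.conj_im]
    have hxs : x^2 = Complex.normSq A := by rw [hx, Complex.sq_norm]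
    have hys : y^2 = Complex.normSq B := by rw [hy, Complex.sq_norm]
    rw [hxs, hys]
    simp only [Complex.normSq_apply, Complex.mul_re, Complex.conj_re, Complex.conj_im]
    ring
  have e2 : (‖A - B‖)^2 = x^2 + y^2 - 2*((starRingEnd ℂ) B * A).re := by
    rw [Complex.sq_norm]
    have hxs : x^2 = Complex.normSq A := by rw [hx, Complex.sq_norm]
    have hys : y^2 = Complex.normSq B := by rw [hy, Complex.sq_norm]
    rw [hxs, hys]
    simp only [Complex.normSq_apply, Complex.sub_re, Complex.sub_im, Complex.mul_re,
      Complex.conj_re, Complex.conj_im]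
    ring
  have hsq : (|x - y| * ‖1 - (starRingEnd ℂ) B * A‖)^2
      ≤ (‖A - B‖ * (1 - y*x))^2 := by
    rw [mul_pow, mul_pow, sq_abs, e1, e2]
    nlinarith [mul_nonneg (mul_nonneg (sub_nonneg.2 hr)
      (by nlinarith : (0:ℝ) ≤ 1 - x^2)) (by nlinarith : (0:ℝ) ≤ 1 - y^2), hx0, hy0]
  have h1 : 0 ≤ |x - y| * ‖1 - (starRingEnd ℂ) B * A‖ :=
    mul_nonneg (abs_nonneg _) (norm_nonneg _)
  have h2 : 0 ≤ ‖A - B‖ * (1 - y*x) :=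
    mul_nonneg (norm_nonneg _) hyx.le
  nlinarith [hsq, h1, h2]

end X

namespace Main
open BM X

lemma Dh_nonneg (φ : ℂ → ℂ) {z : ℂ} (hz : z ∈ ball (0:ℂ) 1) (hfz : φ z ∈ ball (0:ℂ) 1) :
    0 ≤ Dh φ z := by
  have h1 := mem_ball_abs hz
  have h2 := mem_ball_abs hfz
  have h3 := norm_nonneg z
  have h4 := norm_nonneg (φ z)
  apply div_nonneg
  · exact mul_nonneg (by nlinarith) (norm_nonneg _)
  · nlinarith

lemma half (φ : ℂ → ℂ) (hφ : DifferentiableOn ℂ φ (ball (0:ℂ) 1))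
    (hmap : MapsTo φ (ball (0:ℂ) 1) (ball (0:ℂ) 1)) (haut : ¬ IsDiskAut φ)
    {z w : ℂ} (hz : z ∈ ball (0:ℂ) 1) (hw : w ∈ ball (0:ℂ) 1) (hne : w ≠ z) :
    Dh φ z < 1 ∧ pdist (φ w) (φ z) / pdist w z < 1 ∧
      |lam (Dh φ z) - lam (pdist (φ w) (φ z) / pdist w z)| ≤ hdist z w := by
  have hz' := mem_ball_abs hz
  have hw' := mem_ball_abs hw
  have hfz' := mem_ball_abs (hmap hz)
  set F := dslope (hfun φ z) 0 with hF
  have hstrict : ∀ x ∈ ball (0:ℂ) 1, ‖F x‖ < 1 := fun x hx =>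
    hfun_dslope_lt φ hφ hmap haut hz hx
  have hA1 : ‖F 0‖ = Dh φ z := by
    rw [hF, dslope_same]
    exact hfun_deriv_abs φ hφ hmap hz
  set ζ₀ := mobius z w with hζ₀
  have hζ₀abs : ‖ζ₀‖ = pdist w z := rfl
  have hζ₀mem : ζ₀ ∈ ball (0:ℂ) 1 := abs_mem_ball (mobius_abs_lt hz' hw')
  have hζ₀ne : ζ₀ ≠ 0 := by
    rw [hζ₀, mobius]
    exact div_ne_zero (sub_ne_zero.2 hne) (den_ne hz' hw')
  have hB1 : ‖F ζ₀‖ = pdist (φ w) (φ z) / pdist w z := by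
    rw [hF, dslope_of_ne _ hζ₀ne, slope_def_field, hfun_zero φ hz', sub_zero, sub_zero]
    rw [norm_div]
    congr 1
    show ‖mobius (φ z) (φ (mobius (-z) (mobius z w)))‖ = _
    rw [mobius_inv hz' hw']
    rfl
  have hA : ‖F 0‖ < 1 := hstrict 0 (mem_ball_self one_pos)
  have hB : ‖F ζ₀‖ < 1 := hstrict ζ₀ hζ₀mem
  refine ⟨hA1 ▸ hA, hB1 ▸ hB, ?_⟩
  have hsp : pdist (F ζ₀) (F 0) ≤ pdist w z := by
    rw [← hζ₀abs]
    exact F_pdist_le φ hφ hmap haut hz hζ₀mem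
  have hDh0 : 0 ≤ Dh φ z := hA1 ▸ norm_nonneg (F 0)
  have hq0 : 0 ≤ pdist (φ w) (φ z) / pdist w z := hB1 ▸ norm_nonneg (F ζ₀)
  rw [← hdist_real hDh0 (hA1 ▸ hA) hq0 (hB1 ▸ hB), ← hA1, ← hB1]
  have hwz1 : pdist w z < 1 := pdist_lt_one hw' hz'
  calc hdist ↑(‖F 0‖) ↑(‖F ζ₀‖)
      = lam (pdist ↑(‖F 0‖) ↑(‖F ζ₀‖)) := rfl
    _ ≤ lam (pdist (F 0) (F ζ₀)) :=
        lam_mono (pdist_nonneg _ _) (pdist_abs_le hA hB) (pdist_lt_one hA hB)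
    _ = lam (pdist (F ζ₀) (F 0)) := by rw [pdist_symm]
    _ ≤ lam (pdist w z) := lam_mono (pdist_nonneg _ _) hsp hwz1
    _ = hdist w z := rfl
    _ = hdist z w := hdist_symm _ _

end Main

theorem beardon_minda_distortion (φ : ℂ → ℂ)
    (hφ : DifferentiableOn ℂ φ (ball (0:ℂ) 1))
    (hmap : MapsTo φ (ball (0:ℂ) 1) (ball (0:ℂ) 1))
    (haut : ¬ IsDiskAut φ) :
    ∀ z ∈ ball (0:ℂ) 1, ∀ w ∈ ball (0:ℂ) 1,
      hdist ((Dh φ z : ℝ) : ℂ) ((Dh φ w : ℝ) : ℂ) ≤ 2 * hdist z w := by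
  intro z hz w hw
  by_cases hne : w = z
  · subst hne
    simp [hdist, X.pdist_self]
  · obtain ⟨h1a, h1b, h1c⟩ := Main.half φ hφ hmap haut hz hw hne
    obtain ⟨h2a, h2b, h2c⟩ := Main.half φ hφ hmap haut hw hz (fun h => hne h.symm)
    have hq : pdist (φ z) (φ w) / pdist z w = pdist (φ w) (φ z) / pdist w z := by
      rw [X.pdist_symm (φ z) (φ w), X.pdist_symm z w]
    rw [hq] at h2c
    rw [X.hdist_symm w z] at h2c
    have hDz0 : 0 ≤ Dh φ z := Main.Dh_nonneg φ hz (hmap hz)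
    have hDw0 : 0 ≤ Dh φ w := Main.Dh_nonneg φ hw (hmap hw)
    rw [X.hdist_real hDz0 h1a hDw0 h2a]
    set q := pdist (φ w) (φ z) / pdist w z
    calc |X.lam (Dh φ z) - X.lam (Dh φ w)|
        ≤ |X.lam (Dh φ z) - X.lam q| + |X.lam q - X.lam (Dh φ w)| := abs_sub_le _ _ _
      _ ≤ hdist z w + hdist z w := by
          rw [abs_sub_comm (X.lam q)]
          exact add_le_add h1c h2c
      _ = 2 * hdist z w := by ring
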